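/- Let 0 → N' → N → N'' → 0 be a short exact sequence of finitely generated abelian groups, and let ψ be a symmetric bilinear real-valued pairing on N (nondegenerate modulo torsion) such that the induced decomposition N ⊗ ℚ ≅ (N' ⊗ ℚ) ⊕ (N'' ⊗ ℚ) is orthogonal with respect to ψ. Then Δ(N) = Δ(N') · Δ(N''), where Δ denotes the regulator-type determinant: Δ(M) = det(ψ(b_i, b_j)) / (M : ⟨b_i⟩)² for any maximal linearly independent subset {b_i} of M. -/
import Mathlib


theorem range_append_aux {α : Type*} {m n : ℕ} (u : Fin m → α) (v : Fin n → α) :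
    Set.range (Fin.append u v) = Set.range u ∪ Set.range v := by
  ext x
  constructor
  · rintro ⟨i, rfl⟩
    rcases finSumFinEquiv.surjective i with ⟨j, rfl⟩
    cases j with
    | inl j => left; exact ⟨j, by simp [Fin.append_left]⟩
    | inr j => right; exact ⟨j, by simp [Fin.append_right]⟩
  · rintro (⟨i, rfl⟩ | ⟨i, rfl⟩)
    · exact ⟨Fin.castAdd n i, Fin.append_left u v i⟩
    · exact ⟨Fin.natAdd m i, Fin.append_right u v i⟩

theorem card_aux {N' N N'' : Type*} [AddCommGroup N'] [AddCommGroup N] [AddCommGroup N'']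
    (f : N' →ₗ[ℤ] N) (g : N →ₗ[ℤ] N'')
    (hf : Function.Injective f) (hg : Function.Surjective g)
    (hexact : LinearMap.range f = LinearMap.ker g)
    {m' m'' : ℕ} (b' : Fin m' → N') (c : Fin m'' → N)
    (hc : LinearIndependent ℤ (g ∘ c)) :
    Nat.card (N ⧸ Submodule.span ℤ (Set.range (Fin.append (f ∘ b') c))) =
    Nat.card (N' ⧸ Submodule.span ℤ (Set.range b')) *
    Nat.card (N'' ⧸ Submodule.span ℤ (Set.range (g ∘ c))) := by
  set S' := Submodule.span ℤ (Set.range b') with hS'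
  set S'' := Submodule.span ℤ (Set.range (g ∘ c)) with hS''
  set L := Submodule.span ℤ (Set.range (Fin.append (f ∘ b') c)) with hLdef
  have hL : L = S'.map f ⊔ Submodule.span ℤ (Set.range c) := by
    rw [hLdef, range_append_aux, Submodule.span_union, Set.range_comp,
      ← Submodule.map_span]
  have h1 : S' ≤ L.comap f := by
    intro x hx
    simp only [Submodule.mem_comap, hL]
    exact Submodule.mem_sup_left ⟨x, hx, rfl⟩
  have hgf : ∀ x, g (f x) = 0 := fun x =>
    LinearMap.mem_ker.mp (hexact ▸ LinearMap.mem_range_self f x)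
  have h2 : L ≤ S''.comap g := by
    rw [hL]
    apply sup_le
    · rintro _ ⟨x, -, rfl⟩
      exact Submodule.mem_comap.mpr (by rw [hgf x]; exact zero_mem _)
    · rw [Submodule.span_le]
      rintro _ ⟨i, rfl⟩
      exact Submodule.mem_comap.mpr (Submodule.subset_span ⟨i, rfl⟩)
  let F : (N' ⧸ S') →ₗ[ℤ] N ⧸ L := Submodule.mapQ S' L f h1
  let G : (N ⧸ L) →ₗ[ℤ] N'' ⧸ S'' := Submodule.mapQ L S'' g h2
  have hGsurj : Function.Surjective G := by
    intro z
    obtain ⟨z, rfl⟩ := Submodule.Quotient.mk_surjective S'' z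
    obtain ⟨y, rfl⟩ := hg z
    exact ⟨Submodule.Quotient.mk y, by simp [G, Submodule.mapQ_apply]⟩
  have hcspan : Submodule.span ℤ (Set.range c) ≤ L := hL ▸ le_sup_right
  have hFinj : Function.Injective F := by
    apply LinearMap.ker_eq_bot.mp
    rw [Submodule.eq_bot_iff]
    intro q hq
    obtain ⟨x, rfl⟩ := Submodule.Quotient.mk_surjective S' q
    have hfx : f x ∈ L := by
      have := (LinearMap.mem_ker.mp hq)
      rwa [Submodule.mapQ_apply, Submodule.Quotient.mk_eq_zero] at this
    rw [hL, Submodule.mem_sup] at hfx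
    obtain ⟨y, ⟨s, hs, rfl⟩, z, hz, hyz⟩ := hfx
    rw [Submodule.mem_span_range_iff_exists_fun] at hz
    obtain ⟨a, ha⟩ := hz
    have hgz : g z = 0 := by
      have := congrArg g hyz
      simpa [map_add, hgf] using this
    have ha0 : ∀ i, a i = 0 := by
      apply Fintype.linearIndependent_iff.mp hc
      have h : g (∑ i, a i • c i) = 0 := ha ▸ hgz
      simpa [map_sum, map_smul] using h
    have hz0 : z = 0 := by rw [← ha]; simp [ha0]
    rw [hz0, add_zero] at hyz
    have : x = s := hf hyz.symm
    rw [Submodule.Quotient.mk_eq_zero]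
    exact this ▸ hs
  have hker : LinearMap.ker G = LinearMap.range F := by
    apply le_antisymm
    · intro q hq
      obtain ⟨y, rfl⟩ := Submodule.Quotient.mk_surjective L q
      have hgy : g y ∈ S'' := by
        have := LinearMap.mem_ker.mp hq
        rwa [Submodule.mapQ_apply, Submodule.Quotient.mk_eq_zero] at this
      rw [hS'', Submodule.mem_span_range_iff_exists_fun] at hgy
      obtain ⟨a, ha⟩ := hgy
      set t := ∑ i, a i • c i with ht
      have hgt : g (y - t) = 0 := by
        simp only [map_sub, ht, map_sum, map_smul]
        rw [sub_eq_zero, ← ha]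
        simp [Function.comp]
      obtain ⟨x, hx⟩ := (hexact ▸ LinearMap.mem_ker.mpr hgt : y - t ∈ LinearMap.range f)
      refine ⟨Submodule.Quotient.mk x, ?_⟩
      rw [Submodule.mapQ_apply, hx]
      have htL : t ∈ L := hcspan (by
        rw [Submodule.mem_span_range_iff_exists_fun]; exact ⟨a, rfl⟩)
      rw [Submodule.Quotient.mk_sub, (Submodule.Quotient.mk_eq_zero _).mpr htL, sub_zero]
    · rintro _ ⟨q, rfl⟩
      obtain ⟨x, rfl⟩ := Submodule.Quotient.mk_surjective S' q
      simp only [LinearMap.mem_ker, F, G, Submodule.mapQ_apply, hgf x]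
      exact (Submodule.Quotient.mk_eq_zero _).mpr (zero_mem _)
  have e1 : Nat.card (N ⧸ L) = Nat.card ((N ⧸ L) ⧸ LinearMap.ker G) * Nat.card (LinearMap.ker G) :=
    AddSubgroup.card_eq_card_quotient_mul_card_addSubgroup (LinearMap.ker G).toAddSubgroup
  have e2 : Nat.card (LinearMap.ker G) = Nat.card (N' ⧸ S') := by
    rw [hker]
    exact Nat.card_congr (LinearEquiv.ofInjective F hFinj).symm.toEquiv
  have e3 : Nat.card ((N ⧸ L) ⧸ LinearMap.ker G) = Nat.card (N'' ⧸ S'') :=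
    Nat.card_congr (G.quotKerEquivOfSurjective hGsurj).toEquiv
  rw [e1, e2, e3, mul_comm]

theorem det_aux {N : Type*} {m' m'' : ℕ} (u : Fin m' → N) (v : Fin m'' → N)
    (ψ : N → N → ℝ) (hsymm : ∀ x y, ψ x y = ψ y x)
    (horth : ∀ i j, ψ (u i) (v j) = 0) :
    Matrix.det (Matrix.of fun i j : Fin (m' + m'') =>
        ψ (Fin.append u v i) (Fin.append u v j)) =
    Matrix.det (Matrix.of fun i j : Fin m' => ψ (u i) (u j)) *
    Matrix.det (Matrix.of fun i j : Fin m'' => ψ (v i) (v j)) := by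
  have key : (Matrix.of fun i j : Fin (m' + m'') =>
      ψ (Fin.append u v i) (Fin.append u v j)) =
      (Matrix.fromBlocks (Matrix.of fun i j : Fin m' => ψ (u i) (u j)) 0 0
        (Matrix.of fun i j : Fin m'' => ψ (v i) (v j))).submatrix
        finSumFinEquiv.symm finSumFinEquiv.symm := by
    ext i j
    rcases finSumFinEquiv.surjective i with ⟨i, rfl⟩
    rcases finSumFinEquiv.surjective j with ⟨j, rfl⟩
    cases i with
    | inl i =>
      cases j with
      | inl j =>
        simp only [Matrix.of_apply, Matrix.submatrix_apply, Equiv.symm_apply_apply, finSumFinEquiv_symm_apply_castAdd, finSumFinEquiv_symm_apply_natAdd,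
          Matrix.fromBlocks_apply₁₁, finSumFinEquiv_apply_left, Fin.append_left]
      | inr j =>
        simp only [Matrix.of_apply, Matrix.submatrix_apply, Equiv.symm_apply_apply, finSumFinEquiv_symm_apply_castAdd, finSumFinEquiv_symm_apply_natAdd,
          Matrix.fromBlocks_apply₁₂, finSumFinEquiv_apply_left, finSumFinEquiv_apply_right,
          Fin.append_left, Fin.append_right, Matrix.zero_apply]
        exact horth i j
    | inr i =>
      cases j with
      | inl j =>
        simp only [Matrix.of_apply, Matrix.submatrix_apply, Equiv.symm_apply_apply, finSumFinEquiv_symm_apply_castAdd, finSumFinEquiv_symm_apply_natAdd,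
          Matrix.fromBlocks_apply₂₁, finSumFinEquiv_apply_left, finSumFinEquiv_apply_right,
          Fin.append_left, Fin.append_right, Matrix.zero_apply]
        rw [hsymm]; exact horth j i
      | inr j =>
        simp only [Matrix.of_apply, Matrix.submatrix_apply, Equiv.symm_apply_apply, finSumFinEquiv_symm_apply_castAdd, finSumFinEquiv_symm_apply_natAdd,
          Matrix.fromBlocks_apply₂₂, finSumFinEquiv_apply_right, Fin.append_right]
  rw [key, Matrix.det_submatrix_equiv_self, Matrix.det_fromBlocks_zero₂₁]


/-- For a short exact sequence `0 → N' → N → N'' → 0` of finitely generated abelian groups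
and a symmetric biadditive real pairing `ψ` on `N` (nondegenerate modulo torsion) for which
the induced rational splitting is orthogonal, one has `Δ(N) = Δ(N') · Δ(N'')`.  Here the
regulator-type determinant `Δ` of each group is computed from a maximal ℤ-linearly
independent family together with the index of the subgroup it generates: on `N'` via the
restricted pairing `ψ(f·, f·)`, on `N''` via the descended pairing computed on lifts `c`,
and on `N` via the combined family `(f ∘ b') ++ c`. -/
theorem stmt7 {N' N N'' : Type*} [AddCommGroup N'] [AddCommGroup N] [AddCommGroup N'']
    [Module.Finite ℤ N'] [Module.Finite ℤ N] [Module.Finite ℤ N'']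
    (f : N' →ₗ[ℤ] N) (g : N →ₗ[ℤ] N'')
    (hf : Function.Injective f) (hg : Function.Surjective g)
    (hexact : LinearMap.range f = LinearMap.ker g)
    (ψ : N → N → ℝ)
    (hsymm : ∀ x y, ψ x y = ψ y x)
    (hadd : ∀ x y z, ψ (x + y) z = ψ x z + ψ y z)
    (hnd : ∀ x : N, (∀ y, ψ x y = 0) → ∃ n : ℤ, n ≠ 0 ∧ n • x = 0)
    {m' m'' : ℕ} (b' : Fin m' → N') (c : Fin m'' → N)
    (hb' : LinearIndependent ℤ b')
    (hc : LinearIndependent ℤ (g ∘ c))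
    (hfin' : Finite (N' ⧸ Submodule.span ℤ (Set.range b')))
    (hfin'' : Finite (N'' ⧸ Submodule.span ℤ (Set.range (g ∘ c))))
    (hfin : Finite (N ⧸ Submodule.span ℤ (Set.range (Fin.append (f ∘ b') c))))
    (horth : ∀ i j, ψ (f (b' i)) (c j) = 0) :
    Matrix.det (Matrix.of fun i j : Fin (m' + m'') =>
        ψ (Fin.append (f ∘ b') c i) (Fin.append (f ∘ b') c j)) /
      ((Nat.card (N ⧸ Submodule.span ℤ (Set.range (Fin.append (f ∘ b') c))) : ℝ)) ^ 2 =
    (Matrix.det (Matrix.of fun i j : Fin m' => ψ (f (b' i)) (f (b' j))) /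
      ((Nat.card (N' ⧸ Submodule.span ℤ (Set.range b')) : ℝ)) ^ 2) *
    (Matrix.det (Matrix.of fun i j : Fin m'' => ψ (c i) (c j)) /
      ((Nat.card (N'' ⧸ Submodule.span ℤ (Set.range (g ∘ c))) : ℝ)) ^ 2) := by
  have hdet : Matrix.det (Matrix.of fun i j : Fin (m' + m'') =>
      ψ (Fin.append (f ∘ b') c i) (Fin.append (f ∘ b') c j)) =
      Matrix.det (Matrix.of fun i j : Fin m' => ψ (f (b' i)) (f (b' j))) *
      Matrix.det (Matrix.of fun i j : Fin m'' => ψ (c i) (c j)) :=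
    det_aux (f ∘ b') c ψ hsymm horth
  have hcard := card_aux f g hf hg hexact b' c hc
  rw [hdet, hcard, Nat.cast_mul, mul_pow]
  exact mul_div_mul_comm _ _ _ _
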